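/- arXiv:2512.02677 — 2 statements merged into one kernel-verified Lean document; each statement's English description precedes it below -/
import Mathlib

section
/- The rightmost base case in a postfix string is located at a position determined by a suffix-local pattern: in any well-formed postfix expression of positive depth, the first function token f (scanning left to right) that is immediately preceded by arity(f) constant tokens marks the end of a base-case subexpression, and such a token always exists. -/
inductive Expr (C F : Type) (ar : F → ℕ) : Type
  | const : C → Expr C F ar
  | node : (f : F) → (Fin (ar f) → Expr C F ar) → Expr C F ar

variable {C F : Type} {ar : F → ℕ}

/-- Recursion depth. -/
def Expr.depth : Expr C F ar → ℕ
  | .const _ => 0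
  | .node _ ts => 1 + Finset.univ.sup (fun i => (ts i).depth)

/-- Standard recursive evaluation. -/
def Expr.eval (interp : ∀ f, (Fin (ar f) → C) → C) : Expr C F ar → C
  | .const c => c
  | .node f ts => interp f (fun i => (ts i).eval interp)

/-- Postorder flattening of an expression tree into a token sequence over C ⊕ F. -/
def Expr.flatten : Expr C F ar → List (C ⊕ F)
  | .const c => [Sum.inl c]
  | .node f ts => (List.ofFn fun i => (ts i).flatten).flatten ++ [Sum.inr f]

/-- Subexpression relation: e itself, or a subexpression of an immediate argument. -/
inductive Expr.IsSubexpr : Expr C F ar → Expr C F ar → Prop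
  | refl (e : Expr C F ar) : Expr.IsSubexpr e e
  | child {s : Expr C F ar} {f : F} {ts : Fin (ar f) → Expr C F ar} (i : Fin (ar f)) :
      Expr.IsSubexpr s (ts i) → Expr.IsSubexpr s (.node f ts)

/-- A base case: a function symbol applied to constants only. -/
def Expr.IsBase (e : Expr C F ar) : Prop :=
  ∃ (f : F) (cs : Fin (ar f) → C), e = .node f (fun i => .const (cs i))

lemma Expr.flatten_ne_nil (e : Expr C F ar) : e.flatten ≠ [] := by
  cases e <;> simp [Expr.flatten]

lemma flatten_ofFn_singleton {α : Type*} {n : ℕ} (h : Fin n → α) :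
    (List.ofFn fun i => [h i]).flatten = List.ofFn h := by
  induction n with
  | zero => simp
  | succ n ih => simp [List.ofFn_succ, ih]

lemma Expr.const_of_getLast_inl (e : Expr C F ar) (c : C)
    (h : e.flatten.getLast? = some (Sum.inl c)) : e = Expr.const c := by
  cases e with
  | const c' => simp [Expr.flatten] at h; simp [h]
  | node f ts => simp [Expr.flatten] at h

lemma exists_base (e : Expr C F ar) (he : 1 ≤ e.depth) :
    ∃ b : Expr C F ar, b.IsSubexpr e ∧ b.IsBase := by
  induction e with
  | const c => simp [Expr.depth] at he
  | node f ts ih =>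
    by_cases h : ∀ i, ∃ c, ts i = Expr.const c
    · refine ⟨_, Expr.IsSubexpr.refl _, f, fun i => (h i).choose, ?_⟩
      congr 1; funext i; exact (h i).choose_spec
    · push_neg at h
      obtain ⟨i, hi⟩ := h
      have hd : 1 ≤ (ts i).depth := by
        cases hts : ts i with
        | const c => exact absurd hts (hi c)
        | node g ss => simp [hts, Expr.depth]
      obtain ⟨b, hb1, hb2⟩ := ih i hd
      exact ⟨b, Expr.IsSubexpr.child i hb1, hb2⟩

lemma infix_of_subexpr {b e : Expr C F ar} (h : b.IsSubexpr e) :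
    ∃ u w, e.flatten = u ++ b.flatten ++ w := by
  induction h with
  | refl => exact ⟨[], [], by simp⟩
  | child i h ih =>
    rename_i f ts
    obtain ⟨u, w, huw⟩ := ih
    have hmem : (ts i).flatten ∈ List.ofFn fun j => (ts j).flatten :=
      List.mem_ofFn.2 ⟨i, rfl⟩
    obtain ⟨A, B, hAB⟩ := List.infix_of_mem_flatten hmem
    refine ⟨A ++ u, w ++ B ++ [Sum.inr f], ?_⟩
    simp only [Expr.flatten, ← hAB, huw]
    simp

lemma split_right {α : Type*} {A B v w : List α} {x : α}
    (h : A ++ B = v ++ [x] ++ w) (hp : A.length ≤ v.length) :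
    ∃ v', B = v' ++ [x] ++ w ∧ v = A ++ v' := by
  rw [List.append_assoc] at h
  rcases List.append_eq_append_iff.1 h with ⟨a', h1, h2⟩ | ⟨c', h1, h2⟩
  · exact ⟨a', by rw [h2, ← List.append_assoc], h1⟩
  · have hc : c' = [] := by
      have := congrArg List.length h1; simp at this; exact List.eq_nil_of_length_eq_zero (by omega)
    subst hc
    simp at h1 h2
    exact ⟨[], by simp [← h2], by simp [h1]⟩

lemma split_left {α : Type*} {A B v w : List α} {x : α}
    (h : A ++ B = v ++ [x] ++ w) (hp : v.length + 1 ≤ A.length) :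
    ∃ w', A = v ++ [x] ++ w' ∧ w = w' ++ B := by
  rcases List.append_eq_append_iff.1 h with ⟨a', h1, h2⟩ | ⟨c', h1, h2⟩
  · have ha : a' = [] := by
      have := congrArg List.length h1; simp at this; exact List.eq_nil_of_length_eq_zero (by omega)
    subst ha
    simp at h1 h2
    exact ⟨[], by simp [h1], by simp [h2]⟩
  · exact ⟨c', h1, h2⟩

lemma window_suffix {α β : Type*} {n : ℕ} (t v' : List (α ⊕ β))
    (hQ : ∀ x ∈ (t ++ v').drop ((t ++ v').length - n), ∃ c, x = Sum.inl c) :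
    ∀ x ∈ v'.drop (v'.length - n), ∃ c, x = Sum.inl c := by
  intro x hx
  apply hQ
  rw [List.drop_append]
  refine List.mem_append_right _ ?_
  have : (t ++ v').length - n - t.length = v'.length - n := by simp; omega
  rw [this]
  exact hx

lemma mem_drop_of_getLast? {α : Type*} {l : List α} {y : α}
    (h : l.getLast? = some y) {k : ℕ} (hk : k < l.length) : y ∈ l.drop k := by
  have h2 : l.drop k ≠ [] := by rw [Ne, List.drop_eq_nil_iff]; omega
  have h3 : (l.drop k).getLast? = l.getLast? := by
    conv_rhs => rw [← List.take_append_drop k l]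
    rw [List.getLast?_append_of_ne_nil _ h2]
  exact List.mem_of_getLast? (by rw [h3, h])

lemma allconst (es : List (Expr C F ar)) (n : ℕ) (hn : es.length ≤ n)
    (hQ : ∀ x ∈ ((es.map Expr.flatten).flatten).drop
        (((es.map Expr.flatten).flatten).length - n), ∃ c, x = Sum.inl c) :
    ∃ cs : List C, es = cs.map Expr.const ∧
      (es.map Expr.flatten).flatten = cs.map Sum.inl := by
  induction es using List.reverseRecOn generalizing n with
  | nil => exact ⟨[], by simp, by simp⟩
  | append_singleton es t ih =>
    have hn1 : 1 ≤ n := le_trans (by simp) hn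
    set L := (es.map Expr.flatten).flatten with hL
    have hfl : (((es ++ [t]).map Expr.flatten).flatten) = L ++ t.flatten := by
      simp [hL]
    rw [hfl] at hQ
    have hne := Expr.flatten_ne_nil t
    obtain ⟨y, hy⟩ : ∃ y, t.flatten.getLast? = some y := by
      cases hyy : t.flatten.getLast? with
      | none => exact absurd (List.getLast?_eq_none_iff.1 hyy) hne
      | some y => exact ⟨y, rfl⟩
    have hylast : (L ++ t.flatten).getLast? = some y := by
      rw [List.getLast?_append_of_ne_nil _ hne, hy]
    have hymem : y ∈ (L ++ t.flatten).drop ((L ++ t.flatten).length - n) := by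
      apply mem_drop_of_getLast? hylast
      have : 1 ≤ (L ++ t.flatten).length := by
        simp only [List.length_append]
        have := List.length_pos_iff.2 hne
        omega
      omega
    obtain ⟨c, hc⟩ := hQ y hymem
    subst hc
    have htc : t = Expr.const c := Expr.const_of_getLast_inl t c hy
    subst htc
    have htf : (Expr.const c : Expr C F ar).flatten = [Sum.inl c] := rfl
    rw [htf] at hQ
    have hQ' : ∀ x ∈ L.drop (L.length - (n - 1)), ∃ c', x = Sum.inl c' := by
      intro x hx
      apply hQ
      rw [List.drop_append]
      apply List.mem_append_left
      have : (L ++ [Sum.inl c]).length - n = L.length - (n - 1) := by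
        simp; omega
      rw [this]; exact hx
    obtain ⟨cs, hcs1, hcs2⟩ := ih (n - 1) (by simp at hn ⊢; omega) hQ'
    refine ⟨cs ++ [c], by simp [hcs1], ?_⟩
    rw [hfl, htf, hcs2]; simp

lemma pattern_subexpr (N : ℕ) :
    ∀ (es : List (Expr C F ar)) (v w : List (C ⊕ F)) (g : F),
      ((es.map Expr.flatten).flatten).length ≤ N →
      (es.map Expr.flatten).flatten = v ++ [Sum.inr g] ++ w →
      (∀ x ∈ v.drop (v.length - ar g), ∃ c, x = Sum.inl c) →
      ∃ (cs : Fin (ar g) → C) (t : Expr C F ar), t ∈ es ∧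
        (Expr.node g fun i => Expr.const (cs i)).IsSubexpr t ∧
        ∃ u, v = u ++ List.ofFn (fun i => Sum.inl (cs i)) := by
  induction N with
  | zero =>
    intro es v w g hN heq _
    rw [heq] at hN
    simp at hN
  | succ N ih =>
    intro es v w g hN heq hwin
    cases es with
    | nil =>
      exfalso
      have := congrArg List.length heq
      simp at this
    | cons t es' =>
      have hsplit : ((t :: es').map Expr.flatten).flatten
          = t.flatten ++ (es'.map Expr.flatten).flatten := by simp
      set R := (es'.map Expr.flatten).flatten with hR
      rw [hsplit] at heq hN
      by_cases hp : v.length + 1 ≤ t.flatten.length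
      · obtain ⟨w₁, hA, hw⟩ := split_left heq hp
        cases t with
        | const c =>
          exfalso
          have hlen := congrArg List.length hA
          simp [Expr.flatten] at hlen
          have hv : v = [] := List.eq_nil_of_length_eq_zero (by omega)
          have hw₁ : w₁ = [] := List.eq_nil_of_length_eq_zero (by omega)
          subst hv; subst hw₁
          simp [Expr.flatten] at hA
        | node h ss =>
          have hA' : (((List.ofFn ss).map Expr.flatten).flatten) ++ [Sum.inr h]
              = v ++ [Sum.inr g] ++ w₁ := by
            rw [← hA]
            simp [Expr.flatten, List.map_ofFn, Function.comp_def]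
          have hlenflat : (Expr.node h ss).flatten.length
              = (((List.ofFn ss).map Expr.flatten).flatten).length + 1 := by
            conv_lhs => rw [show (Expr.node h ss).flatten
              = (((List.ofFn ss).map Expr.flatten).flatten) ++ [Sum.inr h] from by
                simp [Expr.flatten, List.map_ofFn, Function.comp_def]]
            simp
          rcases List.eq_nil_or_concat w₁ with rfl | ⟨w₁', z, rfl⟩
          · -- the pattern's function token is the root of t
            have h1 : (((List.ofFn ss).map Expr.flatten).flatten) ++ [Sum.inr h]
                = v ++ [Sum.inr g] := by simpa using hA'
            obtain ⟨hLc, hg⟩ := List.append_inj' h1 (by simp)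
            have hg' : h = g := by simpa using hg
            subst hg'
            obtain ⟨cs, hcs1, hcs2⟩ := allconst (List.ofFn ss) (ar h)
              (by simp) (by rw [hLc]; exact hwin)
            have hcslen : cs.length = ar h := by
              have := congrArg List.length hcs1
              simpa using this.symm
            refine ⟨fun i => cs.get (Fin.cast hcslen.symm i), Expr.node h ss,
              by simp, ?_, [], ?_⟩
            · have hss : ss = fun i => Expr.const (cs.get (Fin.cast hcslen.symm i)) := by
                funext i
                have h1 : (List.ofFn ss)[(i : ℕ)]'(by simp) = ss i := by simp
                have h2 := List.getElem_of_eq hcs1 (i := (i : ℕ)) (by simp)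
                rw [h1] at h2
                simp only [List.getElem_map] at h2
                exact h2
              rw [hss]
              exact Expr.IsSubexpr.refl _
            · have hv : v = cs.map Sum.inl := hLc.symm.trans hcs2
              rw [hv]
              simp only [List.nil_append]
              apply List.ext_getElem (by simp [hcslen])
              intro i h1 h2
              simp
          · -- the pattern is strictly inside t : recurse into children of t
            have h1 : (((List.ofFn ss).map Expr.flatten).flatten) ++ [Sum.inr h]
                = (v ++ [Sum.inr g] ++ w₁') ++ [z] := by
              rw [hA']; simp
            obtain ⟨hLc, _⟩ := List.append_inj' h1 (by simp)
            have hNlt : (((List.ofFn ss).map Expr.flatten).flatten).length ≤ N := by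
              have e2 : ((Expr.node h ss).flatten ++ R).length
                  = (Expr.node h ss).flatten.length + R.length := List.length_append
              omega
            obtain ⟨cs, t', ht'mem, ht'sub, u, hu⟩ := ih (List.ofFn ss) v w₁' g hNlt hLc hwin
            obtain ⟨i, hi⟩ := List.mem_ofFn.1 ht'mem
            refine ⟨cs, Expr.node h ss, by simp, ?_, u, hu⟩
            exact Expr.IsSubexpr.child i (hi ▸ ht'sub)
      · push_neg at hp
        have hp' : t.flatten.length ≤ v.length := by omega
        obtain ⟨v', hB, hv⟩ := split_right heq hp'
        have hwin' : ∀ x ∈ v'.drop (v'.length - ar g), ∃ c, x = Sum.inl c := by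
          apply window_suffix t.flatten v'
          rw [← hv]; exact hwin
        have hNlt : R.length ≤ N := by
          have h1 := List.length_pos_iff.2 (Expr.flatten_ne_nil t)
          simp only [List.length_append] at hN
          omega
        obtain ⟨cs, t', ht'mem, ht'sub, u, hu⟩ := ih es' v' w g hNlt hB hwin'
        exact ⟨cs, t', List.mem_cons_of_mem _ ht'mem, ht'sub, t.flatten ++ u,
          by rw [hv, hu]; simp⟩

lemma base_flatten {f : F} (cs : Fin (ar f) → C) :
    (Expr.node f fun i => Expr.const (cs i)).flatten
      = (List.ofFn fun i => Sum.inl (cs i)) ++ [Sum.inr f] := by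
  show (List.ofFn fun i => (Expr.const (cs i) : Expr C F ar).flatten).flatten
      ++ [Sum.inr f] = _
  have : (fun i => (Expr.const (cs i) : Expr C F ar).flatten)
      = fun i => [Sum.inl (cs i)] := rfl
  rw [this, flatten_ofFn_singleton]

theorem first_base_pattern_is_base_case (har : ∀ f, 1 ≤ ar f)
    (e : Expr C F ar) (he : 1 ≤ e.depth) :
    ∃ (u w : List (C ⊕ F)) (f : F) (cs : Fin (ar f) → C),
      e.flatten = u ++ ((List.ofFn fun i => Sum.inl (cs i)) ++ [Sum.inr f]) ++ w ∧
      (∃ b : Expr C F ar, b.IsSubexpr e ∧ b.IsBase ∧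
        b.flatten = (List.ofFn fun i => Sum.inl (cs i)) ++ [Sum.inr f]) ∧
      -- firstness: no function token preceded by arity-many constant tokens occurs earlier
      (∀ (u' w' : List (C ⊕ F)) (g : F) (cs' : Fin (ar g) → C),
        e.flatten = u' ++ ((List.ofFn fun i => Sum.inl (cs' i)) ++ [Sum.inr g]) ++ w' →
        u.length + ar f ≤ u'.length + ar g) := by
  classical
  obtain ⟨b0, hb0sub, hb0base⟩ := exists_base e he
  obtain ⟨f0, cs0, hb0eq⟩ := hb0base
  obtain ⟨u0, w0, h0⟩ := infix_of_subexpr hb0sub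
  have h0' : e.flatten
      = u0 ++ ((List.ofFn fun i => Sum.inl (cs0 i)) ++ [Sum.inr f0]) ++ w0 := by
    rw [h0, hb0eq, base_flatten]
  set S : Set ℕ := {n | ∃ (u w : List (C ⊕ F)) (g : F) (cs : Fin (ar g) → C),
      e.flatten = u ++ ((List.ofFn fun i => Sum.inl (cs i)) ++ [Sum.inr g]) ++ w ∧
      n = u.length + ar g} with hS
  have hSne : S.Nonempty := ⟨u0.length + ar f0, u0, w0, f0, cs0, h0', rfl⟩
  obtain ⟨u, w, g, cs, heq, hval⟩ := Nat.sInf_mem hSne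
  set v : List (C ⊕ F) := u ++ List.ofFn fun i => Sum.inl (cs i) with hv
  have heq2 : ([e].map Expr.flatten).flatten = v ++ [Sum.inr g] ++ w := by
    simp only [List.map_cons, List.map_nil, List.flatten_cons, List.flatten_nil,
      List.append_nil, hv]
    rw [heq]; simp [List.append_assoc]
  have hwin : ∀ x ∈ v.drop (v.length - ar g), ∃ c, x = Sum.inl c := by
    intro x hx
    have hlen : v.length - ar g = u.length := by simp [hv]
    rw [hlen, hv, List.drop_left] at hx
    obtain ⟨i, hi⟩ := List.mem_ofFn.1 hx
    exact ⟨cs i, hi.symm⟩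
  obtain ⟨cs', t, htmem, htsub, u', hu'⟩ :=
    pattern_subexpr (([e].map Expr.flatten).flatten).length [e] v w g le_rfl heq2 hwin
  have hte : t = e := by simpa using htmem
  subst hte
  have hident : u = u' ∧ (List.ofFn fun i => Sum.inl (cs i))
      = List.ofFn fun i => Sum.inl (cs' i) :=
    List.append_inj' (hv ▸ hu') (by simp)
  have hcs : cs = cs' := by
    funext i
    have := congrFun (List.ofFn_inj.1 hident.2) i
    exact Sum.inl.inj this
  subst hcs
  refine ⟨u, w, g, cs, heq,
    ⟨Expr.node g fun i => Expr.const (cs i), htsub, ⟨g, cs, rfl⟩, base_flatten cs⟩, ?_⟩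
  intro u' w' g' cs'' h'
  have hmem : u'.length + ar g' ∈ S := ⟨u', w', g', cs'', h', rfl⟩
  calc u.length + ar g = sInf S := hval.symm
    _ ≤ u'.length + ar g' := Nat.sInf_le hmem
end

section
/- Replacing a located base-case substring preserves well-formedness and commutes with evaluation: if a well-formed postfix string s contains a base-case substring c₁…c_k f corresponding to a node of its parse tree, then the string s' obtained by replacing that substring with the constant token f(c₁,…,c_k) is also a well-formed postfix expression, and eval(s') = eval(s). -/
variable {C F : Type} {ar : F → ℕ}

lemma const_of_getLast {e : Expr C F ar} {c : C}
    (h : e.flatten.getLast? = some (Sum.inl c)) : e = .const c := by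
  cases e with
  | const c' => simp [Expr.flatten] at h; rw [h]
  | node g ts =>
    rw [Expr.flatten, List.getLast?_concat] at h
    simp at h

lemma ofFn_update {α : Type*} {n : ℕ} (g : Fin n → α) (j : Fin n) (a : α) :
    List.ofFn (Function.update g j a) = (List.ofFn g).set j a := by
  apply List.ext_getElem (by simp)
  intro i h1 h2
  simp only [List.getElem_ofFn, List.getElem_set, Function.update_apply]
  by_cases hij : (⟨i, by simpa using h1⟩ : Fin n) = j
  · rw [if_pos hij, if_pos (congrArg Fin.val hij.symm)]
  · rw [if_neg hij, if_neg (fun hc => hij (Fin.ext hc.symm))]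

lemma consts_of_eq : ∀ (n : ℕ) (g : Fin n → Expr C F ar) (cs : Fin n → C)
    (v₁ u : List (C ⊕ F)),
    v₁ ++ (List.ofFn fun i => (g i).flatten).flatten = u ++ (List.ofFn fun i => Sum.inl (cs i)) →
    v₁ = u ∧ ∀ i, g i = .const (cs i) := by
  intro n
  induction n with
  | zero =>
    intro g cs v₁ u h
    simp only [List.ofFn_zero, List.flatten_nil, List.append_nil] at h
    exact ⟨h, fun i => i.elim0⟩
  | succ n ih =>
    intro g cs v₁ u h
    rw [List.ofFn_succ' (fun i => (g i).flatten), List.ofFn_succ' (fun i => Sum.inl (cs i))] at h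
    simp only [List.concat_eq_append, List.flatten_append, List.flatten_cons,
      List.flatten_nil, List.append_nil] at h
    have hlast : (g (Fin.last n)).flatten.getLast? = some (Sum.inl (cs (Fin.last n))) := by
      have h1 := congrArg List.getLast? h
      rw [List.getLast?_append, List.getLast?_append, List.getLast?_append] at h1
      rcases hx : (g (Fin.last n)).flatten.getLast? with _ | x
      · exact absurd (List.getLast?_eq_none_iff.mp hx) (Expr.flatten_ne_nil _)
      · rw [hx] at h1; simpa using h1
    have hg := const_of_getLast hlast
    rw [hg] at h
    have h2 : (v₁ ++ (List.ofFn fun i => (g i.castSucc).flatten).flatten) ++ [Sum.inl (cs (Fin.last n))]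
        = (u ++ List.ofFn fun i : Fin n => Sum.inl (cs i.castSucc)) ++ [Sum.inl (cs (Fin.last n))] := by
      simpa [Expr.flatten, List.append_assoc] using h
    obtain ⟨hv, hall⟩ := ih (fun i => g i.castSucc) (fun i => cs i.castSucc) v₁ u
      (List.append_cancel_right h2)
    refine ⟨hv, fun i => Fin.lastCases hg hall i⟩

lemma find_f : ∀ (l : List (Expr C F ar)) (v w : List (C ⊕ F)) (f : F),
    (l.map Expr.flatten).flatten = v ++ Sum.inr f :: w →
    ∃ (l₁ : List (Expr C F ar)) (t : Expr C F ar) (l₂ : List (Expr C F ar))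
      (v' w' : List (C ⊕ F)),
      l = l₁ ++ t :: l₂ ∧ t.flatten = v' ++ Sum.inr f :: w' ∧
      v = (l₁.map Expr.flatten).flatten ++ v' ∧ w = w' ++ (l₂.map Expr.flatten).flatten := by
  intro l
  induction l with
  | nil => intro v w f h; simp at h
  | cons t rest ih =>
    intro v w f h
    simp only [List.map_cons, List.flatten_cons] at h
    rcases List.append_eq_append_iff.mp h with ⟨a', hv, hrest⟩ | ⟨c', ht, hcw⟩
    · obtain ⟨l₁, t', l₂, v', w', hl, ht', hv', hw'⟩ := ih a' w f hrest
      exact ⟨t :: l₁, t', l₂, v', w', by simp [hl], ht',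
        by simp [hv, hv', List.append_assoc], hw'⟩
    · cases c' with
      | nil =>
        obtain ⟨l₁, t', l₂, v', w', hl, ht', hv', hw'⟩ := ih [] w f (by simpa using hcw.symm)
        obtain ⟨h1, h2⟩ := List.append_eq_nil_iff.mp hv'.symm
        exact ⟨t :: l₁, t', l₂, v', w', by simp [hl], ht',
          by simp [ht, h1, h2], hw'⟩
      | cons x c'' =>
        injection hcw with h1 h2
        exact ⟨[], t, rest, v, c'', rfl, h1 ▸ ht, by simp, h2⟩

lemma replace_at (interp : ∀ f, (Fin (ar f) → C) → C) :
    ∀ (e : Expr C F ar) (v w : List (C ⊕ F)) (f : F),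
    e.flatten = v ++ Sum.inr f :: w →
    ∃ (ts : Fin (ar f) → Expr C F ar) (v₁ : List (C ⊕ F)),
      v = v₁ ++ (List.ofFn fun i => (ts i).flatten).flatten ∧
      ∀ d : Expr C F ar, d.eval interp = (Expr.node f ts).eval interp →
        ∃ e' : Expr C F ar, e'.flatten = v₁ ++ d.flatten ++ w ∧
          e'.eval interp = e.eval interp := by
  intro e
  induction e with
  | const c =>
    intro v w f h
    exfalso
    have hmem : Sum.inr f ∈ (Expr.const c : Expr C F ar).flatten := by
      rw [h]; simp
    simp [Expr.flatten] at hmem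
  | node g ts ih =>
    intro v w f h
    rcases List.eq_nil_or_concat w with rfl | ⟨w₂, z, rfl⟩
    · rw [Expr.flatten] at h
      have h' : (List.ofFn fun i => (ts i).flatten).flatten ++ [Sum.inr g]
          = v ++ [Sum.inr f] := h
      obtain ⟨hchild, hgf⟩ := List.append_inj' h' rfl
      have hgf' : g = f := by simpa using hgf
      subst hgf'
      refine ⟨ts, [], by simp [hchild], fun d hd => ⟨d, by simp, by rw [hd]⟩⟩
    · rw [Expr.flatten] at h
      have h' : (List.ofFn fun i => (ts i).flatten).flatten ++ [Sum.inr g]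
          = (v ++ Sum.inr f :: w₂) ++ [z] := by rw [h]; simp
      obtain ⟨hchild, hzz⟩ := List.append_inj' h' rfl
      have hz : z = Sum.inr g := by simpa using hzz.symm
      subst hz
      rw [show (List.ofFn fun i => (ts i).flatten) = (List.ofFn ts).map Expr.flatten
        from Eq.symm List.map_ofFn] at hchild
      obtain ⟨l₁, t, l₂, v', w', hl, ht, hv, hw⟩ := find_f (List.ofFn ts) v w₂ f hchild
      have hlen : l₁.length < ar g := by
        have := congrArg List.length hl
        simp at this
        omega
      set j : Fin (ar g) := ⟨l₁.length, hlen⟩ with hjdef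
      have hj : ts j = t := by
        have hlt : l₁.length < (List.ofFn ts).length := by simp [hlen]
        have h1 : (List.ofFn ts)[l₁.length]'hlt = ts j := by
          rw [List.getElem_ofFn]
        rw [← h1]
        have h2 : (List.ofFn ts)[l₁.length]'hlt = (l₁ ++ t :: l₂)[l₁.length]'(by
          rw [← hl]; exact hlt) := by
          congr 1
        rw [h2, List.getElem_append_right (le_refl _)]
        simp
      obtain ⟨ts', v₁, hv', hrepl⟩ := ih j v' w' f (by rw [hj]; exact ht)
      refine ⟨ts', (l₁.map Expr.flatten).flatten ++ v₁, by
        rw [hv, hv']; simp [List.append_assoc], fun d hd => ?_⟩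
      obtain ⟨t', ht', hev⟩ := hrepl d hd
      refine ⟨Expr.node g (Function.update ts j t'), ?_, ?_⟩
      · rw [Expr.flatten]
        have hofn : (List.ofFn fun i => ((Function.update ts j t') i).flatten)
            = (l₁ ++ t' :: l₂).map Expr.flatten := by
          have h0 : (List.ofFn fun i => ((Function.update ts j t') i).flatten)
              = (List.ofFn (Function.update ts j t')).map Expr.flatten :=
            Eq.symm List.map_ofFn
          rw [h0, ofFn_update, hl, List.set_append]
          simp [hjdef]
        rw [hofn, hw]
        simp [ht', List.append_assoc]
      · rw [Expr.eval, Expr.eval]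
        congr 1
        funext i
        by_cases hij : i = j
        · subst hij
          rw [Function.update_self, hev, hj]
        · rw [Function.update_of_ne hij]

theorem replace_base_case_preserves (interp : ∀ f, (Fin (ar f) → C) → C)
    (e : Expr C F ar) (u w : List (C ⊕ F)) (f : F) (cs : Fin (ar f) → C)
    (hsplit : e.flatten = u ++ ((List.ofFn fun i => Sum.inl (cs i)) ++ [Sum.inr f]) ++ w)
    (hnode : ∃ b : Expr C F ar, b.IsSubexpr e ∧ b.IsBase ∧
      b.flatten = (List.ofFn fun i => Sum.inl (cs i)) ++ [Sum.inr f]) :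
    ∃ e' : Expr C F ar,
      e'.flatten = u ++ [Sum.inl (interp f cs)] ++ w ∧
      e'.eval interp = e.eval interp := by
  have h : e.flatten = (u ++ List.ofFn fun i => Sum.inl (cs i)) ++ Sum.inr f :: w := by
    rw [hsplit]; simp
  obtain ⟨ts, v₁, hv, hrepl⟩ := replace_at interp e _ w f h
  obtain ⟨hu, hts⟩ := consts_of_eq (ar f) ts cs v₁ u hv.symm
  obtain ⟨e', he1, he2⟩ := hrepl (.const (interp f cs)) (by
    rw [Expr.eval, Expr.eval]
    congr 1
    funext i
    rw [hts i, Expr.eval])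
  exact ⟨e', by rw [he1, hu]; simp [Expr.flatten], he2⟩
end
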